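/- Let R_{α,β} = {ζ ∈ ℂ : 0 < Re ζ < α, −β < Im ζ < β} and D = Δ_R^{n−1} × R_{α,β} ⊂ ℂⁿ, where Δ_R is the disc of radius R. For 0 < r < r' < α and points z, w ∈ D with Re(z_n) = r and Re(w_n) = r', the Kobayashi distance satisfies d^K_D(z, w) ≥ (1/2) log(r'/r). -/

import Mathlib

open Set Metric

/-- The Kobayashi infinitesimal pseudometric of a domain `D` in a complex normed space. -/
noncomputable def kobMetric {E : Type*} [NormedAddCommGroup E] [NormedSpace ℂ E]
    (D : Set E) (p v : E) : ℝ :=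
  sInf {α : ℝ | 0 < α ∧ ∃ f : ℂ → E, DifferentiableOn ℂ f (ball (0:ℂ) 1) ∧
    MapsTo f (ball (0:ℂ) 1) D ∧ f 0 = p ∧ fderiv ℂ f 0 1 = α⁻¹ • v}

/-- The Kobayashi length of a path `γ : [0,1] → D`. -/
noncomputable def kobLength {E : Type*} [NormedAddCommGroup E] [NormedSpace ℂ E]
    (D : Set E) (γ : ℝ → E) : ℝ :=
  ∫ t in (0:ℝ)..1, kobMetric D (γ t) (derivWithin γ (Icc 0 1) t)

/-- The (integrated) Kobayashi pseudodistance of `D`: the infimum of Kobayashi lengths of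
`C¹` paths in `D` joining `p` to `q`. -/
noncomputable def kobDist {E : Type*} [NormedAddCommGroup E] [NormedSpace ℂ E]
    (D : Set E) (p q : E) : ℝ :=
  sInf {L : ℝ | ∃ γ : ℝ → E, ContDiffOn ℝ 1 γ (Icc 0 1) ∧ MapsTo γ (Icc 0 1) D ∧
    γ 0 = p ∧ γ 1 = q ∧ L = kobLength D γ}

variable {E : Type*} [NormedAddCommGroup E] [NormedSpace ℂ E]


def kobSet (D : Set E) (p v : E) : Set ℝ :=
  {α : ℝ | 0 < α ∧ ∃ f : ℂ → E, DifferentiableOn ℂ f (ball (0:ℂ) 1) ∧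
    MapsTo f (ball (0:ℂ) 1) D ∧ f 0 = p ∧ fderiv ℂ f 0 1 = α⁻¹ • v}

lemma kobSet_pos {D : Set E} {p v : E} {a : ℝ} (h : a ∈ kobSet D p v) : 0 < a := h.1

lemma kobSet_bddBelow (D : Set E) (p v : E) : BddBelow (kobSet D p v) :=
  ⟨0, fun _ h => (kobSet_pos h).le⟩

/-- Construction of a competitor disc: affine map. -/
lemma mem_kobSet_of_ball {D : Set E} {p v : E} {ε a : ℝ}
    (hball : ball p ε ⊆ D) (ha : 0 < a) (hv : a⁻¹ * ‖v‖ < ε) :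
    a ∈ kobSet D p v := by
  refine ⟨ha, fun ζ => p + ζ • (a⁻¹ • v), ?_, ?_, by simp, ?_⟩
  · intro ζ _
    exact ((differentiable_id.smul_const _).const_add _).differentiableAt.differentiableWithinAt
  · intro ζ hζ
    apply hball
    rw [mem_ball] at hζ ⊢
    simp only [dist_eq_norm, add_sub_cancel_left]
    calc ‖ζ • (a⁻¹ • v)‖ = ‖ζ‖ * ‖a⁻¹ • v‖ := norm_smul _ _
      _ ≤ 1 * ‖a⁻¹ • v‖ := by gcongr; simpa using hζ.le
      _ < ε := by
          rw [one_mul, norm_smul, Real.norm_eq_abs, abs_of_nonneg (inv_nonneg.2 ha.le)]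
          exact hv
  · have h1 : HasDerivAt (fun ζ : ℂ => p + ζ • (a⁻¹ • v)) (a⁻¹ • v) 0 := by
      simpa using ((hasDerivAt_id (0:ℂ)).smul_const (a⁻¹ • v)).const_add p
    rw [fderiv_apply_one_eq_deriv, h1.deriv]

/-- Perturbation: from a competitor at `(p,v)` build competitors at nearby `(p',v')`. -/
lemma kobSet_perturb {D : Set E} (hD : IsOpen D) {p v : E} {a l : ℝ}
    (h : a ∈ kobSet D p v) (hl0 : 0 < l) (hl1 : l < 1) :
    ∃ ε > 0, ∀ p' v', ‖p' - p‖ < ε → ‖v' - v‖ < ε → a / l ∈ kobSet D p' v' := by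
  obtain ⟨ha, f, hf, hmaps, hf0, hf'⟩ := h
  have hsub : closedBall (0:ℂ) l ⊆ ball 0 1 := closedBall_subset_ball hl1
  have hK : IsCompact (f '' closedBall (0:ℂ) l) :=
    (isCompact_closedBall 0 l).image_of_continuousOn (hf.continuousOn.mono hsub)
  have hKD : f '' closedBall (0:ℂ) l ⊆ D := (hmaps.mono_left hsub).image_subset
  obtain ⟨δ, δpos, hδ⟩ := hK.exists_thickening_subset_open hD hKD
  refine ⟨δ / (2 * (1 + l / a)), by positivity, fun p' v' hp' hv' => ?_⟩
  have hla : 0 < l / a := by positivity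
  set c₂ : E := (l / a) • (v' - v) with hc₂
  set g : ℂ → E := fun ζ => f ((l:ℂ) * ζ) + ((p' - p) + ζ • c₂) with hg
  have hball : ∀ ζ : ℂ, ζ ∈ ball (0:ℂ) 1 → (l:ℂ) * ζ ∈ closedBall (0:ℂ) l := by
    intro ζ hζ
    rw [mem_ball, dist_zero_right] at hζ
    rw [mem_closedBall, dist_zero_right, norm_mul, Complex.norm_real,
      Real.norm_eq_abs, abs_of_pos hl0]
    nlinarith [norm_nonneg ζ]
  refine ⟨by positivity, g, ?_, ?_, ?_, ?_⟩
  · intro ζ hζ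
    have h1 : DifferentiableWithinAt ℂ (fun ζ : ℂ => f ((l:ℂ) * ζ)) (ball 0 1) ζ := by
      have := (hf ((l:ℂ) * ζ) (hsub (hball ζ hζ))).comp ζ
        ((differentiableWithinAt_id.const_mul _)) (fun x hx => hsub (hball x hx))
      exact this
    exact h1.add ((differentiableWithinAt_id.smul_const c₂).const_add _)
  · intro ζ hζ
    apply hδ
    rw [mem_thickening_iff]
    refine ⟨f ((l:ℂ) * ζ), mem_image_of_mem f (hball ζ hζ), ?_⟩
    rw [dist_eq_norm, hg]
    have : f ((l:ℂ)*ζ) + ((p' - p) + ζ • c₂) - f ((l:ℂ)*ζ) = (p' - p) + ζ • c₂ := by abel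
    rw [this]
    calc ‖(p' - p) + ζ • c₂‖ ≤ ‖p' - p‖ + ‖ζ • c₂‖ := norm_add_le _ _
      _ = ‖p' - p‖ + ‖ζ‖ * ‖c₂‖ := by rw [norm_smul]
      _ ≤ ‖p' - p‖ + 1 * ‖c₂‖ := by
          gcongr
          rw [mem_ball, dist_zero_right] at hζ; exact hζ.le
      _ < δ := by
          rw [one_mul, hc₂, norm_smul, Real.norm_eq_abs, abs_of_pos hla]
          set ε := δ / (2 * (1 + l / a)) with hε
          have hd : (0:ℝ) < 1 + l / a := by positivity
          have h2 : l / a * ‖v' - v‖ ≤ l / a * ε := mul_le_mul_of_nonneg_left hv'.le hla.le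
          have h4 : ε * (1 + l / a) = δ / 2 := by rw [hε]; field_simp
          nlinarith [hp', δpos]
  · simp [hg, hf0]
  · have hfd : HasDerivAt f (a⁻¹ • v) 0 := by
      have h0 : DifferentiableAt ℂ f 0 :=
        hf.differentiableAt ((isOpen_ball).mem_nhds (by simp))
      have := h0.hasDerivAt
      rwa [← fderiv_apply_one_eq_deriv, hf'] at this
    have h1 : HasDerivAt (fun ζ : ℂ => (l:ℂ) * ζ) (l:ℂ) 0 := by
      simpa using (hasDerivAt_id (0:ℂ)).const_mul (l:ℂ)
    have h2 : HasDerivAt (fun ζ : ℂ => f ((l:ℂ) * ζ)) ((l:ℂ) • (a⁻¹ • v)) 0 := by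
      have := HasDerivAt.scomp (0:ℂ) (by simpa using hfd) h1
      exact this
    have h3 : HasDerivAt g ((l:ℂ) • (a⁻¹ • v) + c₂) 0 := by
      apply h2.add
      simpa using ((hasDerivAt_id (0:ℂ)).smul_const c₂).const_add (p' - p)
    rw [fderiv_apply_one_eq_deriv, h3.deriv]
    have hsm : (l:ℂ) • (a⁻¹ • v) = (l * a⁻¹) • v := by
      rw [← Complex.coe_algebraMap, algebraMap_smul, smul_smul]
    rw [hsm, hc₂]
    rw [smul_sub]
    have : (a / l)⁻¹ = l / a := by field_simp
    rw [this]
    have : (l * a⁻¹) • v = (l / a) • v := by rw [div_eq_mul_inv]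
    rw [this]
    abel

/-- Schwarz-type bound: a holomorphic map of the unit disc into the right half-plane
has `‖h'(0)‖ ≤ 2 Re h(0)`. -/
lemma halfplane_deriv_bound {h : ℂ → ℂ}
    (hd : DifferentiableOn ℂ h (ball 0 1))
    (hm : MapsTo h (ball 0 1) {w : ℂ | 0 < w.re}) :
    ‖deriv h 0‖ ≤ 2 * (h 0).re := by
  set p := h 0 with hp
  have hp0 : 0 < p.re := hm (mem_ball_self one_pos)
  have hden : ∀ ζ ∈ ball (0:ℂ) 1, h ζ + (starRingEnd ℂ) p ≠ 0 := by
    intro ζ hζ h0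
    have h1 : 0 < (h ζ).re := hm hζ
    have := congrArg Complex.re h0
    simp only [Complex.add_re, Complex.conj_re, Complex.zero_re] at this
    linarith
  set g : ℂ → ℂ := fun ζ => (h ζ - p) / (h ζ + (starRingEnd ℂ) p) with hgdef
  have hgd : DifferentiableOn ℂ g (ball 0 1) :=
    (hd.sub_const p).div (hd.add_const _) hden
  have hg0 : g 0 = 0 := by simp [hgdef, hp]
  have hgm : MapsTo g (ball 0 1) (ball (0:ℂ) 1) := by
    intro ζ hζ
    have h1 : 0 < (h ζ).re := hm hζ
    rw [mem_ball, dist_zero_right, hgdef]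
    simp only
    rw [norm_div, div_lt_one (norm_pos_iff.2 (hden ζ hζ))]
    have hsq : Complex.normSq (h ζ - p) < Complex.normSq (h ζ + (starRingEnd ℂ) p) := by
      simp only [Complex.normSq_apply, Complex.sub_re, Complex.sub_im, Complex.add_re,
        Complex.add_im, Complex.conj_re, Complex.conj_im]
      nlinarith
    rw [← Complex.sq_norm, ← Complex.sq_norm] at hsq
    exact lt_of_pow_lt_pow_left₀ 2 (norm_nonneg _) hsq
  have h0mem : (0:ℂ) ∈ ball (0:ℂ) 1 := mem_ball_self one_pos
  have hh : HasDerivAt h (deriv h 0) 0 :=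
    (hd.differentiableAt (isOpen_ball.mem_nhds h0mem)).hasDerivAt
  have hgder : HasDerivAt g
      ((deriv h 0 * (p + (starRingEnd ℂ) p) - (p - p) * deriv h 0) /
        (p + (starRingEnd ℂ) p) ^ 2) 0 :=
    (hh.sub_const p).div (hh.add_const _) (by simpa [hp] using hden 0 h0mem)
  have hschwarz : ‖deriv g 0‖ ≤ 1 / 1 :=
    Complex.norm_deriv_le_div_of_mapsTo_ball hgd (by rw [hg0]; exact hgm.mono_right ball_subset_closedBall) one_pos
  rw [hgder.deriv] at hschwarz
  have hpc : p + (starRingEnd ℂ) p = ((2 * p.re : ℝ) : ℂ) := Complex.add_conj p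
  rw [hpc] at hschwarz
  have h2p : (0:ℝ) < 2 * p.re := by linarith
  rw [sub_self, zero_mul, sub_zero, norm_div, norm_mul] at hschwarz
  rw [norm_pow, Complex.norm_real, Real.norm_eq_abs, abs_of_pos h2p] at hschwarz
  rw [div_le_iff₀ (by positivity), one_div_one, one_mul] at hschwarz
  nlinarith [norm_nonneg (deriv h 0)]

lemma kobSet_nonempty {D : Set E} (hDo : IsOpen D) {p : E} (hp : p ∈ D) (v : E) :
    (kobSet D p v).Nonempty := by
  obtain ⟨ε, hε, hball⟩ := Metric.isOpen_iff.1 hDo p hp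
  refine ⟨‖v‖ / ε + 1, mem_kobSet_of_ball hball (by positivity) ?_⟩
  rw [inv_mul_eq_div, div_lt_iff₀ (by positivity)]
  have : ε * (‖v‖ / ε + 1) = ‖v‖ + ε := by field_simp
  rw [this]
  linarith

lemma kobMetric_eq_sInf (D : Set E) (p v : E) : kobMetric D p v = sInf (kobSet D p v) := rfl

lemma kobMetric_nonneg (D : Set E) (p v : E) : 0 ≤ kobMetric D p v :=
  Real.sInf_nonneg (fun _ h => (kobSet_pos h).le)

lemma kob_lower {n : ℕ} {D : Set (EuclideanSpace ℂ (Fin (n+1)))} (hDo : IsOpen D)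
    (hDh : D ⊆ {z : EuclideanSpace ℂ (Fin (n+1)) | 0 < (z (Fin.last n)).re})
    {p : EuclideanSpace ℂ (Fin (n+1))} (hp : p ∈ D) (v : EuclideanSpace ℂ (Fin (n+1))) :
    |(v (Fin.last n)).re| / (2 * (p (Fin.last n)).re) ≤ kobMetric D p v := by
  have hpre : 0 < (p (Fin.last n)).re := hDh hp
  rw [kobMetric_eq_sInf]
  refine le_csInf (kobSet_nonempty hDo hp v) ?_
  rintro a ⟨ha, f, hf, hmaps, hf0, hf'⟩
  set L : EuclideanSpace ℂ (Fin (n+1)) →L[ℂ] ℂ := EuclideanSpace.proj (Fin.last n) with hL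
  set h : ℂ → ℂ := fun ζ => L (f ζ) with hh
  have hhd : DifferentiableOn ℂ h (ball 0 1) :=
    L.differentiable.comp_differentiableOn hf
  have hhm : MapsTo h (ball 0 1) {w : ℂ | 0 < w.re} := fun ζ hζ => hDh (hmaps hζ)
  have hderiv : deriv h 0 = a⁻¹ • (v (Fin.last n)) := by
    have h0mem : (0:ℂ) ∈ ball (0:ℂ) 1 := mem_ball_self one_pos
    have hfd : DifferentiableAt ℂ f 0 := hf.differentiableAt (isOpen_ball.mem_nhds h0mem)
    have h2 := L.hasFDerivAt.comp 0 hfd.hasFDerivAt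
    have h3 : HasFDerivAt h (L.comp (fderiv ℂ f 0)) 0 := h2
    rw [← fderiv_apply_one_eq_deriv, h3.fderiv]
    simp only [ContinuousLinearMap.coe_comp', Function.comp_apply, hf']
    simp [hL]
  have hbound := halfplane_deriv_bound hhd hhm
  rw [hderiv] at hbound
  have hh0 : (h 0).re = (p (Fin.last n)).re := by simp [hh, hL, hf0]
  rw [hh0] at hbound
  have hn : ‖a⁻¹ • (v (Fin.last n))‖ = a⁻¹ * ‖v (Fin.last n)‖ := by
    rw [norm_smul, Real.norm_eq_abs, abs_of_pos (inv_pos.2 ha)]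
  rw [hn] at hbound
  have habs : |(v (Fin.last n)).re| ≤ ‖v (Fin.last n)‖ := Complex.abs_re_le_norm _
  rw [div_le_iff₀ (by positivity)]
  have h1 : a⁻¹ * ‖v (Fin.last n)‖ ≤ 2 * (p (Fin.last n)).re := hbound
  calc |(v (Fin.last n)).re| ≤ ‖v (Fin.last n)‖ := habs
    _ = a * (a⁻¹ * ‖v (Fin.last n)‖) := by field_simp
    _ ≤ a * (2 * (p (Fin.last n)).re) := by gcongr
    _ = a * (2 * (p (Fin.last n)).re) := rfl

/-- Along continuous data staying in an open domain, the Kobayashi metric is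
upper semicontinuous. -/
lemma kob_usc {D : Set E} (hDo : IsOpen D) {Γ V : ℝ → E}
    (hΓ : Continuous Γ) (hV : Continuous V) (hmem : ∀ t, Γ t ∈ D) :
    UpperSemicontinuous (fun t => kobMetric D (Γ t) (V t)) := by
  intro t₀ c hc
  simp only at hc
  rw [kobMetric_eq_sInf] at hc
  obtain ⟨a, haS, hac⟩ := exists_lt_of_csInf_lt (kobSet_nonempty hDo (hmem t₀) (V t₀)) hc
  have ha : 0 < a := kobSet_pos haS
  have hc0 : 0 < c := ha.trans hac
  set l : ℝ := (a / c + 1) / 2 with hl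
  have hacl : a / c < 1 := (div_lt_one hc0).2 hac
  have hl0 : 0 < l := by positivity
  have hl1 : l < 1 := by rw [hl]; linarith
  have halc : a / l < c := by
    rw [div_lt_iff₀ hl0, hl]
    have : a / c * c = a := div_mul_cancel₀ a hc0.ne'
    nlinarith
  obtain ⟨ε, hε, hkey⟩ := kobSet_perturb hDo haS hl0 hl1
  have hev1 : ∀ᶠ t in nhds t₀, ‖Γ t - Γ t₀‖ < ε := by
    have := Metric.tendsto_nhds.1 (hΓ.tendsto t₀) ε hε
    filter_upwards [this] with t ht
    rwa [dist_eq_norm] at ht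
  have hev2 : ∀ᶠ t in nhds t₀, ‖V t - V t₀‖ < ε := by
    have := Metric.tendsto_nhds.1 (hV.tendsto t₀) ε hε
    filter_upwards [this] with t ht
    rwa [dist_eq_norm] at ht
  filter_upwards [hev1, hev2] with t h1 h2
  have : a / l ∈ kobSet D (Γ t) (V t) := hkey _ _ h1 h2
  calc kobMetric D (Γ t) (V t) ≤ a / l := csInf_le (kobSet_bddBelow _ _ _) this
    _ < c := halc

/-- Uniform upper bound for the Kobayashi metric along continuous data with
image in a compact part of an open domain. -/
lemma kob_bound {D : Set E} (hDo : IsOpen D) {Γ V : ℝ → E}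
    (hΓ : Continuous Γ) (hV : Continuous V) (hmem : ∀ t, Γ t ∈ D)
    (hΓI : ∀ t, Γ t ∈ Γ '' (Icc 0 1)) (hVI : ∀ t, V t ∈ V '' (Icc 0 1)) :
    ∃ M : ℝ, ∀ t, kobMetric D (Γ t) (V t) ≤ M := by
  have hK : IsCompact (Γ '' Icc (0:ℝ) 1) := (isCompact_Icc).image hΓ
  have hKD : Γ '' Icc (0:ℝ) 1 ⊆ D := by rintro x ⟨t, _, rfl⟩; exact hmem t
  obtain ⟨δ, hδ0, hδ⟩ := hK.exists_thickening_subset_open hDo hKD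
  obtain ⟨C, hC⟩ := ((isCompact_Icc).image hV).exists_bound_of_continuousOn
    continuousOn_id
  set a : ℝ := C / δ + 1 with ha
  have hC0 : 0 ≤ C := le_trans (norm_nonneg _) (hC _ (hVI 0))
  have ha0 : 0 < a := by positivity
  refine ⟨a, fun t => ?_⟩
  have hball : ball (Γ t) δ ⊆ D := by
    refine subset_trans ?_ hδ
    exact ball_subset_thickening (hΓI t) δ
  have hva : a⁻¹ * ‖V t‖ < δ := by
    have h1 : ‖V t‖ ≤ C := by simpa using hC _ (hVI t)
    have h2 : C < a * δ := by
      rw [ha]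
      have : C / δ * δ = C := div_mul_cancel₀ C hδ0.ne'
      nlinarith
    rw [inv_mul_eq_div, div_lt_iff₀ ha0]
    nlinarith
  exact csInf_le (kobSet_bddBelow _ _ _) (mem_kobSet_of_ball hball ha0 hva)

/-- Lower bound for the Kobayashi length of a path in a domain contained in the
"right half-space" in the last coordinate. -/
lemma length_lower {n : ℕ} {D : Set (EuclideanSpace ℂ (Fin (n+1)))}
    (hDo : IsOpen D) (hDh : D ⊆ {z : EuclideanSpace ℂ (Fin (n+1)) | 0 < (z (Fin.last n)).re})
    {γ : ℝ → EuclideanSpace ℂ (Fin (n+1))}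
    (hγ : ContDiffOn ℝ 1 γ (Icc 0 1)) (hmaps : MapsTo γ (Icc 0 1) D) :
    (1/2) * Real.log (((γ 1) (Fin.last n)).re / ((γ 0) (Fin.last n)).re) ≤ kobLength D γ := by
  set d : ℝ → EuclideanSpace ℂ (Fin (n+1)) := fun t => derivWithin γ (Icc 0 1) t with hd
  have hdc : ContinuousOn d (Icc 0 1) :=
    hγ.continuousOn_derivWithin (uniqueDiffOn_Icc one_pos) le_rfl
  -- clamp
  set pr : ℝ → ℝ := fun t => min 1 (max 0 t) with hpr
  have hprc : Continuous pr := continuous_const.min (continuous_const.max continuous_id)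
  have hprmem : ∀ t, pr t ∈ Icc (0:ℝ) 1 :=
    fun t => ⟨le_min zero_le_one (le_max_left 0 t), min_le_left _ _⟩
  have hprid : ∀ t ∈ Icc (0:ℝ) 1, pr t = t := by
    intro t ht
    simp only [hpr]
    rw [max_eq_right ht.1, min_eq_right ht.2]
  set Γ : ℝ → EuclideanSpace ℂ (Fin (n+1)) := fun t => γ (pr t) with hΓ
  set V : ℝ → EuclideanSpace ℂ (Fin (n+1)) := fun t => d (pr t) with hV
  have hΓc : Continuous Γ := hγ.continuousOn.comp_continuous hprc hprmem
  have hVc : Continuous V := hdc.comp_continuous hprc hprmem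
  have hΓD : ∀ t, Γ t ∈ D := fun t => hmaps (hprmem t)
  set k : ℝ → ℝ := fun t => kobMetric D (Γ t) (V t) with hk
  have husc : UpperSemicontinuous k := kob_usc hDo hΓc hVc hΓD
  have hmeas : Measurable k := husc.measurable
  have hself : ∀ (f : ℝ → EuclideanSpace ℂ (Fin (n+1))), ∀ t,
      (fun s => f (pr s)) t ∈ (fun s => f (pr s)) '' Icc (0:ℝ) 1 := by
    intro f t
    exact ⟨pr t, hprmem t, by simp only [hprid _ (hprmem t)]⟩
  obtain ⟨M, hM⟩ := kob_bound hDo hΓc hVc hΓD (hself γ) (hself d)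
  have hknn : ∀ t, 0 ≤ k t := fun t => kobMetric_nonneg _ _ _
  have kInt : IntervalIntegrable k MeasureTheory.volume 0 1 := by
    rw [intervalIntegrable_iff]
    apply MeasureTheory.Integrable.mono' (g := fun _ => M)
      (MeasureTheory.integrableOn_const measure_Ioc_lt_top.ne)
      hmeas.aestronglyMeasurable.restrict
    filter_upwards with t
    rw [Real.norm_eq_abs, abs_of_nonneg (hknn t)]
    exact hM t
  -- the comparison function
  set g₀ : ℝ → ℝ := fun t => ((d t) (Fin.last n)).re / (2 * ((γ t) (Fin.last n)).re) with hg₀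
  have hpos : ∀ t ∈ Icc (0:ℝ) 1, 0 < ((γ t) (Fin.last n)).re := fun t ht => hDh (hmaps ht)
  have hcont_re : ContinuousOn (fun t => ((γ t) (Fin.last n)).re) (Icc (0:ℝ) 1) :=
    Complex.continuous_re.comp_continuousOn
      ((EuclideanSpace.proj (Fin.last n)).continuous.comp_continuousOn hγ.continuousOn)
  have hcont_dre : ContinuousOn (fun t => ((d t) (Fin.last n)).re) (Icc (0:ℝ) 1) :=
    Complex.continuous_re.comp_continuousOn
      ((EuclideanSpace.proj (Fin.last n)).continuous.comp_continuousOn hdc)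
  have hg₀c : ContinuousOn g₀ (Icc (0:ℝ) 1) := by
    apply hcont_dre.div (continuousOn_const.mul hcont_re)
    intro t ht
    have := hpos t ht
    exact mul_ne_zero two_ne_zero this.ne'
  have hg₀int : IntervalIntegrable g₀ MeasureTheory.volume 0 1 :=
    (hg₀c.mono (by rw [uIcc_of_le zero_le_one])).intervalIntegrable
  -- pointwise comparison
  have hpw : ∀ t ∈ Icc (0:ℝ) 1, g₀ t ≤ k t := by
    intro t ht
    have hkt : k t = kobMetric D (γ t) (d t) := by rw [hk]; simp only [hΓ, hV, hprid t ht]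
    rw [hkt, hg₀]
    calc ((d t) (Fin.last n)).re / (2 * ((γ t) (Fin.last n)).re)
        ≤ |((d t) (Fin.last n)).re| / (2 * ((γ t) (Fin.last n)).re) := by
          have h2 := hpos t ht
          exact (div_le_div_iff_of_pos_right (by positivity)).2 (le_abs_self _)

      _ ≤ kobMetric D (γ t) (d t) := kob_lower hDo hDh (hmaps ht) (d t)
  -- FTC for the comparison function
  set u : ℝ → ℝ := fun t => (1/2 : ℝ) * Real.log (((γ t) (Fin.last n)).re) with hu
  have hucont : ContinuousOn u (Icc 0 1) :=
    continuousOn_const.mul (hcont_re.log (fun t ht => (hpos t ht).ne'))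
  have huderiv : ∀ x ∈ Ioo (0:ℝ) 1, HasDerivWithinAt u (g₀ x) (Ioi x) x := by
    intro x hx
    have hIccn : Icc (0:ℝ) 1 ∈ nhds x := Icc_mem_nhds hx.1 hx.2
    have hxI : x ∈ Icc (0:ℝ) 1 := Ioo_subset_Icc_self hx
    have hdiff : DifferentiableAt ℝ γ x :=
      ((hγ.differentiableOn one_ne_zero) x hxI).differentiableAt hIccn
    have hder : HasDerivAt γ (d x) x := by
      have h0 := hdiff.hasDerivAt
      have h1 : d x = deriv γ x := derivWithin_of_mem_nhds hIccn
      rw [h1]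
      exact h0
    set Lr : EuclideanSpace ℂ (Fin (n+1)) →L[ℝ] ℝ :=
      Complex.reCLM.comp ((EuclideanSpace.proj (Fin.last n)).restrictScalars ℝ) with hLr
    have h1 : HasDerivAt (fun t => Lr (γ t)) (Lr (d x)) x :=
      Lr.hasFDerivAt.comp_hasDerivAt x hder
    have h1' : HasDerivAt (fun t => ((γ t) (Fin.last n)).re) (((d x) (Fin.last n)).re) x := by
      simpa [hLr] using h1
    have h2 : HasDerivAt (fun t => Real.log (((γ t) (Fin.last n)).re))
        ((((d x) (Fin.last n)).re) / (((γ x) (Fin.last n)).re)) x :=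
      h1'.log (hpos x hxI).ne'
    have h3 := h2.const_mul (1/2 : ℝ)
    have heq : (1/2 : ℝ) * ((((d x) (Fin.last n)).re) / (((γ x) (Fin.last n)).re)) = g₀ x := by
      rw [hg₀]
      have := hpos x hxI
      field_simp
    rw [heq] at h3
    exact h3.hasDerivWithinAt
  have hFTC : ∫ t in (0:ℝ)..1, g₀ t = u 1 - u 0 :=
    intervalIntegral.integral_eq_sub_of_hasDeriv_right_of_le zero_le_one hucont huderiv hg₀int
  have hcmp : ∫ t in (0:ℝ)..1, g₀ t ≤ ∫ t in (0:ℝ)..1, k t :=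
    intervalIntegral.integral_mono_on zero_le_one hg₀int kInt hpw
  have hlen : kobLength D γ = ∫ t in (0:ℝ)..1, k t := by
    unfold kobLength
    apply intervalIntegral.integral_congr
    intro t ht
    rw [uIcc_of_le zero_le_one] at ht
    simp only [hk, hΓ, hV, hprid t ht, hd]
  have hval : u 1 - u 0
      = 1/2 * Real.log (((γ 1) (Fin.last n)).re / ((γ 0) (Fin.last n)).re) := by
    rw [hu]
    simp only
    rw [Real.log_div (hpos 1 (by norm_num)).ne' (hpos 0 (by norm_num)).ne']
    ring
  rw [hlen]
  linarith

lemma combo_lt {a b u v C : ℝ} (ha : 0 ≤ a) (hb : 0 ≤ b) (hab : a + b = 1)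
    (hu : u < C) (hv : v < C) : a * u + b * v < C := by
  rcases eq_or_lt_of_le ha with h | h
  · have hb1 : b = 1 := by linarith
    rw [← h, hb1]; linarith
  · have hC : a * C + b * C = C := by rw [← add_mul, hab, one_mul]
    nlinarith [mul_lt_mul_of_pos_left hu h, mul_le_mul_of_nonneg_left hv.le hb]

lemma lt_combo {a b u v C : ℝ} (ha : 0 ≤ a) (hb : 0 ≤ b) (hab : a + b = 1)
    (hu : C < u) (hv : C < v) : C < a * u + b * v := by
  have := combo_lt ha hb hab (neg_lt_neg hu) (neg_lt_neg hv)
  linarith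


/-- Boxing Lemma: with `R_{α,β} = {0 < Re ζ < α, |Im ζ| < β}` and
`D = Δ_R^{n} × R_{α,β} ⊆ ℂ^{n+1}`, for `0 < r < r' < α` and `z, w ∈ D` with
`Re z_n = r`, `Re w_n = r'` one has `d^K_D(z, w) ≥ (1/2) log (r' / r)`. -/
theorem boxing_lemma
    (n : ℕ) (R α β : ℝ) (hR : 0 < R) (hα : 0 < α) (hβ : 0 < β)
    (D : Set (EuclideanSpace ℂ (Fin (n + 1))))
    (hD : D = {z : EuclideanSpace ℂ (Fin (n + 1)) |
      (∀ i : Fin n, ‖z i.castSucc‖ < R) ∧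
      0 < (z (Fin.last n)).re ∧ (z (Fin.last n)).re < α ∧
      -β < (z (Fin.last n)).im ∧ (z (Fin.last n)).im < β})
    (r r' : ℝ) (hr : 0 < r) (hrr' : r < r') (hr'α : r' < α)
    (z w : EuclideanSpace ℂ (Fin (n + 1))) (hz : z ∈ D) (hw : w ∈ D)
    (hzr : (z (Fin.last n)).re = r) (hwr : (w (Fin.last n)).re = r') :
    (1 / 2) * Real.log (r' / r) ≤ kobDist D z w := by
  have hDo : IsOpen D := by
    rw [hD]
    have h1 : {z : EuclideanSpace ℂ (Fin (n + 1)) |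
        (∀ i : Fin n, ‖z i.castSucc‖ < R) ∧
        0 < (z (Fin.last n)).re ∧ (z (Fin.last n)).re < α ∧
        -β < (z (Fin.last n)).im ∧ (z (Fin.last n)).im < β}
        = (⋂ i : Fin n, {z : EuclideanSpace ℂ (Fin (n + 1)) | ‖z i.castSucc‖ < R}) ∩
          ({z : EuclideanSpace ℂ (Fin (n + 1)) | 0 < (z (Fin.last n)).re} ∩
          ({z : EuclideanSpace ℂ (Fin (n + 1)) | (z (Fin.last n)).re < α} ∩
          ({z : EuclideanSpace ℂ (Fin (n + 1)) | -β < (z (Fin.last n)).im} ∩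
          {z : EuclideanSpace ℂ (Fin (n + 1)) | (z (Fin.last n)).im < β}))) := by
      ext ζ
      simp only [mem_setOf_eq, mem_inter_iff, mem_iInter]
    rw [h1]
    have hre : Continuous fun ζ : EuclideanSpace ℂ (Fin (n + 1)) => (ζ (Fin.last n)).re :=
      Complex.continuous_re.comp (EuclideanSpace.proj (Fin.last n)).continuous
    have him : Continuous fun ζ : EuclideanSpace ℂ (Fin (n + 1)) => (ζ (Fin.last n)).im :=
      Complex.continuous_im.comp (EuclideanSpace.proj (Fin.last n)).continuous
    refine (isOpen_iInter_of_finite fun i => ?_).inter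
      ((isOpen_lt continuous_const hre).inter ((isOpen_lt hre continuous_const).inter
        ((isOpen_lt continuous_const him).inter (isOpen_lt him continuous_const))))
    exact isOpen_lt (EuclideanSpace.proj i.castSucc).continuous.norm continuous_const
  have hDh : D ⊆ {z : EuclideanSpace ℂ (Fin (n+1)) | 0 < (z (Fin.last n)).re} := by
    rw [hD]; intro ζ hζ; exact hζ.2.1
  have hDconv : Convex ℝ D := by
    rw [hD]
    intro x hx y hy a b ha hb hab
    obtain ⟨hx1, hx2, hx3, hx4, hx5⟩ := hx
    obtain ⟨hy1, hy2, hy3, hy4, hy5⟩ := hy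
    have happ : ∀ j, (a • x + b • y : EuclideanSpace ℂ (Fin (n+1))) j = a • x j + b • y j := by
      intro j; rfl
    refine ⟨fun i => ?_, ?_, ?_, ?_, ?_⟩
    · rw [happ]
      calc ‖a • x i.castSucc + b • y i.castSucc‖
          ≤ ‖a • x i.castSucc‖ + ‖b • y i.castSucc‖ := norm_add_le _ _
        _ = a * ‖x i.castSucc‖ + b * ‖y i.castSucc‖ := by
            rw [norm_smul, norm_smul, Real.norm_eq_abs, Real.norm_eq_abs,
              abs_of_nonneg ha, abs_of_nonneg hb]
        _ < R := combo_lt ha hb hab (hx1 i) (hy1 i)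
    · rw [happ]
      simp only [Complex.add_re, Complex.smul_re, smul_eq_mul]
      exact lt_combo ha hb hab hx2 hy2
    · rw [happ]
      simp only [Complex.add_re, Complex.smul_re, smul_eq_mul]
      exact combo_lt ha hb hab hx3 hy3
    · rw [happ]
      simp only [Complex.add_im, Complex.smul_im, smul_eq_mul]
      exact lt_combo ha hb hab hx4 hy4
    · rw [happ]
      simp only [Complex.add_im, Complex.smul_im, smul_eq_mul]
      exact combo_lt ha hb hab hx5 hy5
  -- the straight-line path
  set γ₀ : ℝ → EuclideanSpace ℂ (Fin (n+1)) := fun t => z + t • (w - z) with hγ₀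
  have hγ₀smooth : ContDiffOn ℝ 1 γ₀ (Icc 0 1) :=
    (contDiff_const.add (contDiff_id.smul contDiff_const)).contDiffOn
  have hγ₀maps : MapsTo γ₀ (Icc 0 1) D := by
    intro t ht
    have hconv : z + t • (w - z) = (1 - t) • z + t • w := by
      rw [smul_sub, sub_smul, one_smul]; abel
    rw [hγ₀]
    simp only
    rw [hconv]
    exact hDconv hz hw (by linarith [ht.2]) ht.1 (by ring)
  have hγ₀0 : γ₀ 0 = z := by simp [hγ₀]
  have hγ₀1 : γ₀ 1 = w := by simp [hγ₀]
  -- conclusion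
  have hne : {L : ℝ | ∃ γ : ℝ → EuclideanSpace ℂ (Fin (n+1)), ContDiffOn ℝ 1 γ (Icc 0 1) ∧
      MapsTo γ (Icc 0 1) D ∧ γ 0 = z ∧ γ 1 = w ∧ L = kobLength D γ}.Nonempty :=
    ⟨kobLength D γ₀, γ₀, hγ₀smooth, hγ₀maps, hγ₀0, hγ₀1, rfl⟩
  refine le_csInf hne ?_
  rintro L ⟨γ, hγ, hmapsγ, h0, h1, rfl⟩
  have := length_lower hDo hDh hγ hmapsγ
  rw [h0, h1, hzr, hwr] at this
  exact this
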